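/- Let Γ be a finite tree. Then the extension graph Γᵉ, defined as the graph with vertex set the conjugates g⁻¹xg of generators x ∈ V(Γ) in G(Γ) and edges between commuting elements, contains no triangles; equivalently, any clique in Γᵉ has size at most 2. -/

import Mathlib

/-- Commutation relations of the right-angled Artin group on `Γ`. -/
def raagRels {V : Type*} (Γ : SimpleGraph V) : Set (FreeGroup V) :=
  {r | ∃ u v : V, Γ.Adj u v ∧
    r = FreeGroup.of u * FreeGroup.of v * (FreeGroup.of u)⁻¹ * (FreeGroup.of v)⁻¹}

/-- The right-angled Artin group (partially commutative group) on the graph `Γ`. -/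
abbrev RAAG {V : Type*} (Γ : SimpleGraph V) : Type _ := PresentedGroup (raagRels Γ)

/-- The standard generator of `RAAG Γ` corresponding to a vertex `v`. -/
def RAAG.gen {V : Type*} (Γ : SimpleGraph V) (v : V) : RAAG Γ := PresentedGroup.of v

/-- Vertices of the extension graph: conjugates of standard generators in `RAAG Γ`. -/
def ExtVertex {V : Type*} (Γ : SimpleGraph V) : Type _ :=
  {g : RAAG Γ // ∃ (x : V) (h : RAAG Γ), g = h⁻¹ * RAAG.gen Γ x * h}

/-- The extension graph `Γᵉ`: edges between distinct commuting conjugates of generators. -/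
def extGraph {V : Type*} (Γ : SimpleGraph V) : SimpleGraph (ExtVertex Γ) where
  Adj u v := u ≠ v ∧ Commute u.val v.val
  symm := by constructor; intro u v h; exact ⟨h.1.symm, h.2.symm⟩
  loopless := by constructor; intro u h; exact h.1 rfl

namespace RAAGAux

open Subgroup
open scoped Classical

variable {V : Type*} (Γ : SimpleGraph V)

theorem gen_comm {u v : V} (h : Γ.Adj u v) :
    Commute (RAAG.gen Γ u) (RAAG.gen Γ v) := by
  rw [← commutatorElement_eq_one_iff_commute]
  have h1 : (PresentedGroup.mk (raagRels Γ))
      (FreeGroup.of u * FreeGroup.of v * (FreeGroup.of u)⁻¹ * (FreeGroup.of v)⁻¹) = 1 := by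
    apply (QuotientGroup.eq_one_iff _).2
    exact Subgroup.subset_normalClosure ⟨u, v, h, rfl⟩
  simpa [commutatorElement_def, RAAG.gen, PresentedGroup.of, map_mul, map_inv] using h1

theorem lift_rels {G : Type*} [Group G] (f : V → G)
    (hf : ∀ u v, Γ.Adj u v → Commute (f u) (f v)) :
    ∀ r ∈ raagRels Γ, FreeGroup.lift f r = 1 := by
  rintro r ⟨u, v, huv, rfl⟩
  have := (hf u v huv).commutator_eq
  simpa [commutatorElement_def, map_mul, map_inv] using this

/-- Lift a vertex assignment with commuting images along edges to a hom out of the RAAG. -/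
def lift {G : Type*} [Group G] (f : V → G)
    (hf : ∀ u v, Γ.Adj u v → Commute (f u) (f v)) : RAAG Γ →* G :=
  PresentedGroup.toGroup (lift_rels Γ f hf)

@[simp] theorem lift_gen {G : Type*} [Group G] (f : V → G)
    (hf : ∀ u v, Γ.Adj u v → Commute (f u) (f v)) (v : V) :
    lift Γ f hf (RAAG.gen Γ v) = f v :=
  PresentedGroup.toGroup.of (lift_rels Γ f hf)

theorem hom_ext {G : Type*} [Group G] {φ ψ : RAAG Γ →* G}
    (h : ∀ v, φ (RAAG.gen Γ v) = ψ (RAAG.gen Γ v)) : φ = ψ :=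
  PresentedGroup.ext h

/-- The exponent-sum homomorphism at a vertex. -/
noncomputable def expSum (y : V) : RAAG Γ →* Multiplicative ℤ :=
  lift Γ (fun v => Multiplicative.ofAdd (if v = y then 1 else 0))
    (fun _ _ _ => Commute.all _ _)

@[simp] theorem expSum_gen (y v : V) :
    expSum Γ y (RAAG.gen Γ v) = Multiplicative.ofAdd (if v = y then 1 else 0) :=
  lift_gen _ _ _ v

theorem expSum_conj (y : V) (τ g : RAAG Γ) :
    expSum Γ y (τ⁻¹ * g * τ) = expSum Γ y g := by
  rw [map_mul, map_mul, map_inv, mul_comm, ← mul_assoc]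
  simp

end RAAGAux


open HNNExtension Subgroup HNNExtension.NormalWord

namespace HNNCent

variable {G : Type*} [Group G] (A : Subgroup G)

lemma toSubgroup_AA (u : ℤˣ) : toSubgroup A A u = A := by
  rcases Int.units_eq_one_or u with rfl | rfl <;> simp

/-- Key step: if `t` commutes with the product of a normal word, the head is in `A`. -/
theorem head_mem_of_comm {d : TransversalPair G A A}
    (hone : ∀ u, (1:G) ∈ d.set u)
    (w : HNNExtension.NormalWord d)
    (hc : t * w.prod (MulEquiv.refl A) = w.prod (MulEquiv.refl A) * t) :
    w.head ∈ A := by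
  classical
  by_contra hA
  set φ : A ≃* A := MulEquiv.refl A with hφ
  have chain₁ : List.Chain'
      (fun a b : ℤˣ × G => a.2 ∈ toSubgroup A A a.1 → a.1 = b.1)
      ((1, w.head) :: w.toList) := by
    refine List.isChain_cons.2 ⟨?_, w.chain⟩
    intro y _ hmem
    rw [toSubgroup_AA] at hmem
    exact absurd hmem hA
  set v₁ : ReducedWord G A A := ⟨1, (1, w.head) :: w.toList, chain₁⟩ with hv₁def
  have hv₁ : v₁.prod φ = t * w.prod φ := by
    simp [ReducedWord.prod, hv₁def, mul_assoc]
  rcases w.toList.eq_nil_or_concat' with hnil | ⟨L, p, hl⟩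
  · set v₂ : ReducedWord G A A := ⟨w.head, [(1,1)], List.isChain_singleton _⟩ with hv₂def
    have hv₂ : v₂.prod φ = w.prod φ * t := by
      simp [ReducedWord.prod, hv₂def, hnil]
    have hprod : v₁.prod φ = v₂.prod φ := by rw [hv₁, hv₂, hc]
    have h2 := (ReducedWord.map_fst_eq_and_of_prod_eq φ hprod).2 1 (by simp [hv₁def])
    rw [toSubgroup_AA] at h2
    simp only [hv₁def, hv₂def, inv_one, one_mul] at h2
    exact hA h2
  · have chainL : List.Chain'
        (fun a b : ℤˣ × G => a.2 ∈ toSubgroup A A a.1 → a.1 = b.1) L := by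
      have hch := w.chain
      rw [hl] at hch
      exact (List.isChain_append.1 hch).1
    by_cases hp : p.2 ∈ A ∧ p.1 = -1
    · -- last letter cancels with the `t` on the right; lengths differ by 2.
      have hpset : p.2 ∈ d.set p.1 := w.mem_set p.1 p.2 (by rw [hl]; simp)
      have hp1 : p.2 = 1 := by
        have hcompl := (d.compl p.1).1
        have hmem : p.2 ∈ toSubgroup A A p.1 := by rw [toSubgroup_AA]; exact hp.1
        have heq := hcompl (a₁ := ⟨⟨p.2, hmem⟩, ⟨1, hone p.1⟩⟩)
          (a₂ := ⟨⟨1, one_mem _⟩, ⟨p.2, hpset⟩⟩) (by simp)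
        have := congrArg (fun q => ((q.1 : G) : G)) heq
        simpa using this
      set v₂ : ReducedWord G A A := ⟨w.head, L, chainL⟩ with hv₂def
      have hv₂ : v₂.prod φ = w.prod φ * t := by
        have hwp : w.prod φ = v₂.prod φ * t⁻¹ := by
          simp [ReducedWord.prod, hv₂def, hl, hp.2, hp1, mul_assoc]
        rw [hwp]; group
      have hprod : v₁.prod φ = v₂.prod φ := by rw [hv₁, hv₂, hc]
      have h1 := (ReducedWord.map_fst_eq_and_of_prod_eq φ hprod).1
      have := congrArg List.length h1
      simp only [hv₁def, hv₂def, List.length_map, List.length_cons, hl,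
        List.length_append, List.length_singleton] at this
      omega
    · -- no cancellation on the right either
      have chain₂ : List.Chain'
          (fun a b : ℤˣ × G => a.2 ∈ toSubgroup A A a.1 → a.1 = b.1)
          (w.toList ++ [(1,1)]) := by
        refine List.isChain_append.2 ⟨w.chain, List.isChain_singleton _, ?_⟩
        intro x hx y hy hmem
        rw [hl, List.getLast?_concat] at hx
        cases hx
        rw [toSubgroup_AA] at hmem
        simp only [List.head?_cons, Option.mem_def, Option.some.injEq] at hy
        rcases Int.units_eq_one_or p.1 with h1 | h1
        · rw [← hy]; exact h1
        · exact absurd ⟨hmem, h1⟩ hp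
      set v₂ : ReducedWord G A A := ⟨w.head, w.toList ++ [(1,1)], chain₂⟩ with hv₂def
      have hv₂ : v₂.prod φ = w.prod φ * t := by
        simp [ReducedWord.prod, hv₂def, mul_assoc]
      have hprod : v₁.prod φ = v₂.prod φ := by rw [hv₁, hv₂, hc]
      have h2 := (ReducedWord.map_fst_eq_and_of_prod_eq φ hprod).2 1 (by simp [hv₁def])
      rw [toSubgroup_AA] at h2
      simp only [hv₁def, hv₂def, inv_one, one_mul] at h2
      exact hA h2

end HNNCent

namespace HNNCent

variable {G : Type*} [Group G] (A : Subgroup G)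

theorem comm_t {c : HNNExtension G A A (MulEquiv.refl A)}
    (hc : t * c = c * t) : ∃ a ∈ A, ∃ k : ℤ, c = of a * t ^ k := by
  classical
  obtain ⟨d, hone⟩ : ∃ d : TransversalPair G A A, ∀ u, (1:G) ∈ d.set u := by
    choose S hS using fun u => (toSubgroup A A u).exists_isComplement_right 1
    exact ⟨⟨S, fun u => (hS u).1⟩, fun u => (hS u).2⟩
  suffices h : ∀ (n : ℕ) (w : HNNExtension.NormalWord d), w.toList.length = n →
      t * w.prod (MulEquiv.refl A) = w.prod (MulEquiv.refl A) * t →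
      ∃ a ∈ A, ∃ k : ℤ, w.prod (MulEquiv.refl A) = of a * t ^ k by
    have hw : ((NormalWord.equiv (MulEquiv.refl A) d) c).prod (MulEquiv.refl A) = c := (NormalWord.equiv (MulEquiv.refl A) d).symm_apply_apply c
    obtain ⟨a, ha, k, hk⟩ := h _ ((NormalWord.equiv (MulEquiv.refl A) d) c) rfl (by rw [hw]; exact hc)
    exact ⟨a, ha, k, by rw [← hw, hk]⟩
  intro n
  induction n with
  | zero =>
    intro w hlen hcw
    have hh := head_mem_of_comm A hone w hcw
    have hnil : w.toList = [] := List.length_eq_zero_iff.mp hlen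
    exact ⟨w.head, hh, 0, by simp [ReducedWord.prod, hnil]⟩
  | succ n ih =>
    intro w hlen hcw
    have hh := head_mem_of_comm A hone w hcw
    obtain ⟨u₁, g₁, rest, hl⟩ : ∃ u₁ g₁ rest, w.toList = (u₁, g₁) :: rest := by
      rcases hlw : w.toList with _ | ⟨⟨u₁, g₁⟩, rest⟩
      · rw [hlw] at hlen; simp at hlen
      · exact ⟨u₁, g₁, rest, rfl⟩
    have chainR : List.Chain'
        (fun a b : ℤˣ × G => a.2 ∈ toSubgroup A A a.1 → a.1 = b.1) rest := by
      have hch := w.chain; rw [hl] at hch; exact (List.isChain_cons.1 hch).2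
    set w' : HNNExtension.NormalWord d :=
      ⟨⟨g₁, rest, chainR⟩, fun u g hmem => w.mem_set u g (by rw [hl]; exact List.mem_cons_of_mem _ hmem)⟩
      with hw'def
    have hrel : w.prod (MulEquiv.refl A) = of w.head * (t ^ ((u₁:ℤˣ):ℤ) * w'.prod (MulEquiv.refl A)) := by
      simp [ReducedWord.prod, hw'def, hl, mul_assoc]
    have hcomm_head : Commute (of w.head : HNNExtension G A A (MulEquiv.refl A)) t :=
      ((t_mul_of (φ := MulEquiv.refl A) ⟨w.head, hh⟩).symm : _)
    have hc' : t * w'.prod (MulEquiv.refl A) = w'.prod (MulEquiv.refl A) * t := by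
      have h1 : t * w.prod (MulEquiv.refl A) = of w.head * (t ^ ((u₁:ℤˣ):ℤ) * (t * w'.prod (MulEquiv.refl A))) := by
        rw [hrel, ← mul_assoc, ← hcomm_head.eq, mul_assoc, ← mul_assoc t,
          ((Commute.refl t).zpow_right ((u₁:ℤˣ):ℤ)).eq, mul_assoc]
      have h2 : w.prod (MulEquiv.refl A) * t = of w.head * (t ^ ((u₁:ℤˣ):ℤ) * (w'.prod (MulEquiv.refl A) * t)) := by
        rw [hrel]; simp [mul_assoc]
      rw [h1, h2] at hcw
      exact mul_left_cancel (mul_left_cancel hcw)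
    obtain ⟨a, ha, k, hk⟩ := ih w' (by
      have := hlen; rw [hl] at this; simpa using this) hc'
    have hcomm_a : Commute (of a : HNNExtension G A A (MulEquiv.refl A)) t :=
      ((t_mul_of (φ := MulEquiv.refl A) ⟨a, ha⟩).symm : _)
    refine ⟨w.head * a, mul_mem hh ha, ((u₁:ℤˣ):ℤ) + k, ?_⟩
    rw [hrel, hk, map_mul, zpow_add]
    rw [← mul_assoc (t ^ ((u₁:ℤˣ):ℤ)), ← (hcomm_a.zpow_right _).eq]
    group

end HNNCent

namespace RAAGAux

open Subgroup HNNExtension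
open scoped Classical

variable {V : Type*} (Γ : SimpleGraph V)

section Centralizer

variable (x : V)

/-- The RAAG on the graph minus the vertex `x`. -/
noncomputable abbrev Kgrp : Type _ := RAAG (Γ.induce {v : V | v ≠ x})

/-- The natural map from the RAAG of the punctured graph. -/
noncomputable def jmap : Kgrp Γ x →* RAAG Γ :=
  lift _ (fun v => RAAG.gen Γ v.val) (fun u v huv => gen_comm Γ (by simpa using huv))

/-- The subgroup generated by the link of `x`, inside the punctured RAAG. -/
noncomputable def Asub : Subgroup (Kgrp Γ x) :=
  Subgroup.closure ((fun v => RAAG.gen (Γ.induce {v : V | v ≠ x}) v) ''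
    {v : {v : V | v ≠ x} | Γ.Adj x v.val})

/-- The map from the RAAG to the HNN extension of the punctured RAAG over the link. -/
noncomputable def Fmap : RAAG Γ →* HNNExtension (Kgrp Γ x) (Asub Γ x) (Asub Γ x)
    (MulEquiv.refl (Asub Γ x)) := by
  refine lift Γ (fun v => if h : v = x then t else of (RAAG.gen _ ⟨v, h⟩)) ?_
  intro u v huv
  by_cases hu : u = x
  · have hv : v ≠ x := by rw [hu] at huv; exact huv.ne'
    rw [dif_pos hu, dif_neg hv]
    have hmem : RAAG.gen (Γ.induce {v : V | v ≠ x}) ⟨v, hv⟩ ∈ Asub Γ x :=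
      subset_closure ⟨⟨v, hv⟩, hu ▸ huv, rfl⟩
    exact (t_mul_of (φ := MulEquiv.refl (Asub Γ x)) ⟨_, hmem⟩ :)
  · by_cases hv : v = x
    · rw [dif_pos hv, dif_neg hu]
      have hmem : RAAG.gen (Γ.induce {v : V | v ≠ x}) ⟨u, hu⟩ ∈ Asub Γ x :=
        subset_closure ⟨⟨u, hu⟩, hv ▸ huv.symm, rfl⟩
      exact ((t_mul_of (φ := MulEquiv.refl (Asub Γ x)) ⟨_, hmem⟩ :)).symm
    · rw [dif_neg hu, dif_neg hv]
      exact (gen_comm _ (by simpa using huv)).map HNNExtension.of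

theorem jmap_comm (a : Kgrp Γ x) (ha : a ∈ Asub Γ x) :
    Commute (RAAG.gen Γ x) (jmap Γ x a) := by
  induction ha using Subgroup.closure_induction with
  | mem g hg =>
    obtain ⟨v, hv, rfl⟩ := hg
    rw [jmap, lift_gen]
    exact gen_comm Γ hv
  | one => simpa using Commute.one_right _
  | mul g₁ g₂ _ _ h1 h2 => rw [map_mul]; exact h1.mul_right h2
  | inv g _ h => rw [map_inv]; exact h.inv_right

/-- The inverse map from the HNN extension back to the RAAG. -/
noncomputable def Finv : HNNExtension (Kgrp Γ x) (Asub Γ x) (Asub Γ x)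
    (MulEquiv.refl (Asub Γ x)) →* RAAG Γ :=
  HNNExtension.lift (jmap Γ x) (RAAG.gen Γ x)
    (fun a => ((jmap_comm Γ x a a.2).eq).symm ▸ (jmap_comm Γ x a a.2).eq)

theorem Finv_Fmap (g : RAAG Γ) : Finv Γ x (Fmap Γ x g) = g := by
  have : (Finv Γ x).comp (Fmap Γ x) = MonoidHom.id _ := by
    apply hom_ext
    intro v
    show Finv Γ x (Fmap Γ x (RAAG.gen Γ v)) = RAAG.gen Γ v
    rw [Fmap, lift_gen]
    by_cases hv : v = x
    · subst hv; rw [dif_pos rfl]; simp [Finv]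
    · rw [dif_neg hv]; simp [Finv, jmap]
  exact DFunLike.congr_fun this g

/-- Centralizer theorem for generators: anything commuting with `gen x` is a product of
an element of the subgroup generated by the neighbours of `x` and a power of `gen x`. -/
theorem centralizer_gen {c : RAAG Γ} (hc : Commute (RAAG.gen Γ x) c) :
    ∃ u k, u ∈ Subgroup.closure (RAAG.gen Γ '' {v | Γ.Adj x v}) ∧
      c = u * (RAAG.gen Γ x) ^ (k : ℤ) := by
  have hFx : Fmap Γ x (RAAG.gen Γ x) = t := by rw [Fmap, lift_gen, dif_pos rfl]
  have hFc : t * Fmap Γ x c = Fmap Γ x c * t := by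
    have := hc.map (Fmap Γ x)
    rwa [hFx] at this
  obtain ⟨a, ha, k, hk⟩ := HNNCent.comm_t (Asub Γ x) hFc
  refine ⟨jmap Γ x a, k, ?_, ?_⟩
  · have h1 : jmap Γ x a ∈ (Asub Γ x).map (jmap Γ x) := ⟨a, ha, rfl⟩
    rw [Asub, MonoidHom.map_closure] at h1
    refine closure_mono ?_ h1
    rintro _ ⟨_, ⟨v, hv, rfl⟩, rfl⟩
    exact ⟨v.val, hv, by rw [jmap, lift_gen]⟩
  · have := congrArg (Finv Γ x) hk
    rw [Finv_Fmap] at this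
    rw [this, map_mul, map_zpow]
    simp [Finv]

end Centralizer

end RAAGAux

namespace RAAGAux

open Subgroup
open scoped Classical

variable {V : Type*} (Γ : SimpleGraph V)

/-- The kill-one-generator endomorphism. -/
noncomputable def killGen (x : V) : RAAG Γ →* RAAG Γ :=
  lift Γ (fun v => if v = x then 1 else RAAG.gen Γ v) (by
    intro u v huv
    by_cases hu : u = x
    · simp [hu]
    · by_cases hv : v = x
      · simp [hv]
      · simpa [hu, hv] using gen_comm Γ huv)

/-- The key dichotomy: a conjugate of a generator commuting with a generator but
distinct from it forces an edge. -/
theorem adj_of_commute_conj {x y : V} {τ : RAAG Γ}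
    (hC : Commute (RAAG.gen Γ x) (τ⁻¹ * RAAG.gen Γ y * τ))
    (hne : τ⁻¹ * RAAG.gen Γ y * τ ≠ RAAG.gen Γ x) : Γ.Adj x y := by
  obtain ⟨u, k, hu, hcu⟩ := centralizer_gen Γ x hC
  have hker : ∀ z, ¬ Γ.Adj x z → expSum Γ z u = 1 := by
    intro z hz
    have hle : Subgroup.closure (RAAG.gen Γ '' {v | Γ.Adj x v}) ≤ (expSum Γ z).ker := by
      rw [Subgroup.closure_le]
      rintro _ ⟨v, hv, rfl⟩
      have hvz : v ≠ z := fun h => hz (h ▸ hv)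
      simp [SetLike.mem_coe, MonoidHom.mem_ker, hvz]
    simpa [MonoidHom.mem_ker] using hle hu
  by_contra hxy
  have hxx : ¬ Γ.Adj x x := Γ.loopless.irrefl x
  by_cases hyx : y = x
  · subst hyx
    -- first show `k = 1`
    have h1 : expSum Γ y (τ⁻¹ * RAAG.gen Γ y * τ) = Multiplicative.ofAdd k := by
      rw [hcu, map_mul, map_zpow, hker y hxy, one_mul, expSum_gen, if_pos rfl]
      simp [← ofAdd_zsmul]
    rw [expSum_conj, expSum_gen, if_pos rfl] at h1
    have hk1 : (1 : ℤ) = k := by simpa using h1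
    -- now kill the generator `y`
    have hκc : killGen Γ y (τ⁻¹ * RAAG.gen Γ y * τ) = 1 := by
      rw [map_mul, map_mul, map_inv, killGen, lift_gen, if_pos rfl, mul_one,
        inv_mul_cancel]
    have hκu : killGen Γ y u = u := by
      have hle : Subgroup.closure (RAAG.gen Γ '' {v | Γ.Adj y v}) ≤
          MonoidHom.eqLocus (killGen Γ y) (MonoidHom.id _) := by
        rw [Subgroup.closure_le]
        rintro _ ⟨v, hv, rfl⟩
        have hvy : v ≠ y := fun h => hxy (h ▸ hv)
        show killGen Γ y (RAAG.gen Γ v) = RAAG.gen Γ v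
        rw [killGen, lift_gen, if_neg hvy]
      exact hle hu
    rw [hcu, map_mul, map_zpow, hκu, killGen, lift_gen, if_pos rfl, one_zpow,
      mul_one] at hκc
    rw [hcu, hκc, one_mul, ← hk1] at hne
    simp at hne
  · -- `y ≠ x` and `¬ x ~ y`: exponent sum at `y` gives a contradiction
    have h1 : expSum Γ y (τ⁻¹ * RAAG.gen Γ y * τ) = 1 := by
      have hxy' : ¬ Γ.Adj x y := hxy
      rw [hcu, map_mul, map_zpow, hker y hxy', one_mul, expSum_gen, if_neg (fun h => hyx h.symm)]
      simp
    rw [expSum_conj, expSum_gen, if_pos rfl] at h1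
    simpa using h1

end RAAGAux

namespace RAAGAux

variable {V : Type*} (Γ : SimpleGraph V)

theorem adj_of_extAdj {a b : ExtVertex Γ} (h : (extGraph Γ).Adj a b)
    {xa xb : V} {g k : RAAG Γ} (ha : a.val = g⁻¹ * RAAG.gen Γ xa * g)
    (hb : b.val = k⁻¹ * RAAG.gen Γ xb * k) : Γ.Adj xa xb := by
  obtain ⟨hne, hcomm⟩ := h
  set τ : RAAG Γ := k * g⁻¹ with hτ
  have hconj : τ⁻¹ * RAAG.gen Γ xb * τ = g * b.val * g⁻¹ := by
    rw [hb, hτ]; group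
  apply adj_of_commute_conj Γ (τ := τ)
  · rw [hconj]
    have h1 := hcomm.map (MulAut.conj g).toMonoidHom
    have h2 : (MulAut.conj g).toMonoidHom a.val = RAAG.gen Γ xa := by
      simp [MulAut.conj_apply, ha]; group
    have h3 : (MulAut.conj g).toMonoidHom b.val = g * b.val * g⁻¹ := by
      simp [MulAut.conj_apply]
    rwa [h2, h3] at h1
  · rw [hconj]
    intro hcontra
    apply hne
    apply Subtype.ext
    have : b.val = g⁻¹ * RAAG.gen Γ xa * g := by
      rw [← hcontra]; group
    rw [ha, ← this]

end RAAGAux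

/-- The extension graph of a finite tree has no triangles; equivalently every clique
has size at most `2`. -/
theorem extGraph_of_tree_triangleFree
    {V : Type*} [Fintype V] (Γ : SimpleGraph V) (hΓ : Γ.IsTree) :
    (extGraph Γ).CliqueFree 3 ∧
      ∀ s : Finset (ExtVertex Γ), (extGraph Γ).IsClique ↑s → s.card ≤ 2 := by
  classical
  have hfree : (extGraph Γ).CliqueFree 3 := by
    intro s hs
    obtain ⟨a, b, c, hab, hac, hbc, rfl⟩ := Finset.card_eq_three.mp hs.2
    have hclique := hs.1
    have hAab : (extGraph Γ).Adj a b := hclique (by simp) (by simp) hab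
    have hAac : (extGraph Γ).Adj a c := hclique (by simp) (by simp) hac
    have hAbc : (extGraph Γ).Adj b c := hclique (by simp) (by simp) hbc
    obtain ⟨xa, ga, hga⟩ := a.property
    obtain ⟨xb, gb, hgb⟩ := b.property
    obtain ⟨xc, gc, hgc⟩ := c.property
    have e1 : Γ.Adj xa xb := RAAGAux.adj_of_extAdj Γ hAab hga hgb
    have e2 : Γ.Adj xb xc := RAAGAux.adj_of_extAdj Γ hAbc hgb hgc
    have e3 : Γ.Adj xc xa := RAAGAux.adj_of_extAdj Γ hAac.symm hgc hga
    -- a triangle in the tree `Γ`: contradiction with acyclicity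
    have hwalk : (SimpleGraph.Walk.cons e1
        (SimpleGraph.Walk.cons e2 (SimpleGraph.Walk.cons e3 SimpleGraph.Walk.nil))).IsCycle := by
      simp [SimpleGraph.Walk.isCycle_def, SimpleGraph.Walk.isTrail_def,
        List.Nodup, e1.ne, e2.ne, e3.ne, e1.ne', e2.ne', e3.ne']
    exact hΓ.2 _ hwalk
  refine ⟨hfree, ?_⟩
  intro s hcl
  by_contra hcard
  obtain ⟨u, hus, hu3⟩ := Finset.exists_subset_card_eq (show 3 ≤ s.card by omega)
  exact hfree u ⟨hcl.subset (Finset.coe_subset.2 hus), hu3⟩
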